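/- arXiv:0908.4326 — 2 statements merged into one kernel-verified Lean document; each statement's English description precedes it below -/
import Mathlib

section
/- Let Q be an m×m real matrix and s > 0 with s greater than the operator norm of Q. Then s · ∫₀^∞ e^{-st} · exp(tQ) dt = s · (sI − Q)⁻¹; in particular sI − Q is invertible. -/
open Matrix MeasureTheory Filter

attribute [local instance] Matrix.linftyOpNormedAddCommGroup Matrix.linftyOpNormedRing
  Matrix.linftyOpNormedAlgebra Matrix.linftyOpNormedSpace

private lemma aux_norm_exp_le {𝔸 : Type*} [NormedRing 𝔸] [NormOneClass 𝔸]
    [NormedAlgebra ℝ 𝔸] [CompleteSpace 𝔸] (x : 𝔸) :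
    ‖NormedSpace.exp x‖ ≤ Real.exp ‖x‖ := by
  rw [NormedSpace.exp_eq_tsum ℝ, Real.exp_eq_exp_ℝ, NormedSpace.exp_eq_tsum ℝ]
  refine (norm_tsum_le_tsum_norm (NormedSpace.norm_expSeries_summable' (𝕂 := ℝ) x)).trans ?_
  refine Summable.tsum_le_tsum (fun n => ?_) (NormedSpace.norm_expSeries_summable' (𝕂 := ℝ) x)
    (NormedSpace.expSeries_summable' (𝕂 := ℝ) ‖x‖)
  rw [norm_smul, smul_eq_mul, Real.norm_eq_abs, abs_of_nonneg (by positivity)]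
  exact mul_le_mul_of_nonneg_left (norm_pow_le x n) (by positivity)

private noncomputable instance aux_cenorm {m : ℕ} : ContinuousENorm (Matrix (Fin m) (Fin m) ℝ) :=
  SeminormedAddGroup.toContinuousENorm

private instance aux_pms {m : ℕ} :
    TopologicalSpace.PseudoMetrizableSpace (Matrix (Fin m) (Fin m) ℝ) :=
  inferInstanceAs (TopologicalSpace.PseudoMetrizableSpace (Fin m → Fin m → ℝ))

theorem stmt_0 {m : ℕ} (Q : Matrix (Fin m) (Fin m) ℝ) (s : ℝ) (hs : 0 < s)
    (hQ : ‖Q‖ < s) :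
    s • (∫ t in Set.Ioi (0 : ℝ), Real.exp (-s * t) • NormedSpace.exp (t • Q)) =
      s • (s • (1 : Matrix (Fin m) (Fin m) ℝ) - Q)⁻¹ ∧
    IsUnit (s • (1 : Matrix (Fin m) (Fin m) ℝ) - Q) := by
  rcases Nat.eq_zero_or_pos m with rfl | hm
  · haveI : Subsingleton (Matrix (Fin 0) (Fin 0) ℝ) :=
      ⟨fun a b => by ext i; exact i.elim0⟩
    exact ⟨Subsingleton.elim _ _,
      ⟨⟨_, s • (1 : Matrix (Fin 0) (Fin 0) ℝ) - Q, Subsingleton.elim _ _,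
        Subsingleton.elim _ _⟩, rfl⟩⟩
  haveI : Nonempty (Fin m) := ⟨⟨0, hm⟩⟩
  set A : Matrix (Fin m) (Fin m) ℝ := Q - s • 1 with hA
  have key : ∀ t : ℝ, Real.exp (-s * t) • NormedSpace.exp (t • Q)
      = NormedSpace.exp (t • A) := by
    intro t
    have hcomm : Commute (t • Q) ((-(s * t)) • (1 : Matrix (Fin m) (Fin m) ℝ)) :=
      ((Commute.one_right (t • Q)).smul_right _)
    have h1 : t • A = t • Q + (-(s * t)) • (1 : Matrix (Fin m) (Fin m) ℝ) := by
      rw [hA, smul_sub, smul_smul, sub_eq_add_neg, ← neg_smul]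
      ring_nf
    have h2 : NormedSpace.exp ((-(s * t)) • (1 : Matrix (Fin m) (Fin m) ℝ))
        = Real.exp (-(s * t)) • (1 : Matrix (Fin m) (Fin m) ℝ) := by
      erw [← Algebra.algebraMap_eq_smul_one, ← NormedSpace.algebraMap_exp_comm,
        Algebra.algebraMap_eq_smul_one, Real.exp_eq_exp_ℝ]
    erw [h1, NormedSpace.exp_add_of_commute hcomm, h2, mul_smul_comm, mul_one]
    congr 2
    ring
  have hbd : ∀ t : ℝ, 0 ≤ t → ‖NormedSpace.exp (t • A)‖ ≤ Real.exp (-(s - ‖Q‖) * t) := by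
    intro t ht
    rw [← key t, norm_smul, Real.norm_eq_abs, Real.abs_exp]
    calc Real.exp (-s * t) * ‖NormedSpace.exp (t • Q)‖
        ≤ Real.exp (-s * t) * Real.exp ‖t • Q‖ :=
          mul_le_mul_of_nonneg_left (aux_norm_exp_le _) (Real.exp_pos _).le
      _ = Real.exp (-(s - ‖Q‖) * t) := by
          rw [← Real.exp_add, norm_smul, Real.norm_eq_abs, abs_of_nonneg ht]
          ring_nf
  have hspos : 0 < s - ‖Q‖ := sub_pos.mpr hQ
  have hgint : IntegrableOn (fun t : ℝ => Real.exp (-(s - ‖Q‖) * t)) (Set.Ioi 0) :=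
    exp_neg_integrableOn_Ioi 0 hspos
  have hcontexp : Continuous fun t : ℝ => NormedSpace.exp (t • A) :=
    NormedSpace.exp_continuous.comp (continuous_id.smul continuous_const)
  have hint : IntegrableOn (fun t : ℝ => NormedSpace.exp (t • A)) (Set.Ioi 0) := by
    refine Integrable.mono' hgint (hcontexp.aestronglyMeasurable.restrict) ?_
    filter_upwards [ae_restrict_mem measurableSet_Ioi] with t ht
    exact hbd t (le_of_lt ht)
  have htend : Tendsto (fun t : ℝ => NormedSpace.exp (t • A)) atTop (nhds 0) := by
    have hev : ∀ᶠ t : ℝ in atTop,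
        ‖NormedSpace.exp (t • A)‖ ≤ Real.exp (-(s - ‖Q‖) * t) := by
      filter_upwards [eventually_ge_atTop (0 : ℝ)] with t ht using hbd t ht
    have h1 : Tendsto (fun t : ℝ => (s - ‖Q‖) * t) atTop atTop :=
      Tendsto.const_mul_atTop hspos tendsto_id
    have h2 : Tendsto (fun t : ℝ => Real.exp (-(s - ‖Q‖) * t)) atTop (nhds 0) := by
      exact (Real.tendsto_exp_neg_atTop_nhds_zero.comp h1).congr fun t => by
        simp only [Function.comp_apply]; ring_nf
    exact squeeze_zero_norm' hev h2
  have hL : ∫ t in Set.Ioi (0 : ℝ), A * NormedSpace.exp (t • A) = -1 := by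
    have := integral_Ioi_of_hasDerivAt_of_tendsto (a := (0 : ℝ))
      (f := fun t : ℝ => NormedSpace.exp (t • A))
      (f' := fun t : ℝ => A * NormedSpace.exp (t • A)) (m := 0)
      hcontexp.continuousWithinAt
      (fun x _ => hasDerivAt_exp_smul_const' A x)
      ?_ htend
    · simpa using this
    · refine Integrable.mono' (hgint.const_mul ‖A‖)
        (((continuous_const.mul hcontexp)).aestronglyMeasurable.restrict) ?_
      filter_upwards [ae_restrict_mem measurableSet_Ioi] with t ht
      calc ‖A * NormedSpace.exp (t • A)‖ ≤ ‖A‖ * ‖NormedSpace.exp (t • A)‖ :=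
            norm_mul_le _ _
        _ ≤ ‖A‖ * Real.exp (-(s - ‖Q‖) * t) :=
            mul_le_mul_of_nonneg_left (hbd t ht.le) (norm_nonneg _)
  have hR : ∫ t in Set.Ioi (0 : ℝ), NormedSpace.exp (t • A) * A = -1 := by
    have := integral_Ioi_of_hasDerivAt_of_tendsto (a := (0 : ℝ))
      (f := fun t : ℝ => NormedSpace.exp (t • A))
      (f' := fun t : ℝ => NormedSpace.exp (t • A) * A) (m := 0)
      hcontexp.continuousWithinAt
      (fun x _ => hasDerivAt_exp_smul_const A x)
      ?_ htend
    · simpa using this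
    · refine Integrable.mono' (hgint.const_mul ‖A‖)
        (((hcontexp.mul continuous_const)).aestronglyMeasurable.restrict) ?_
      filter_upwards [ae_restrict_mem measurableSet_Ioi] with t ht
      calc ‖NormedSpace.exp (t • A) * A‖ ≤ ‖NormedSpace.exp (t • A)‖ * ‖A‖ :=
            norm_mul_le _ _
        _ ≤ Real.exp (-(s - ‖Q‖) * t) * ‖A‖ :=
            mul_le_mul_of_nonneg_right (hbd t ht.le) (norm_nonneg _)
        _ = ‖A‖ * Real.exp (-(s - ‖Q‖) * t) := mul_comm _ _
  set I : Matrix (Fin m) (Fin m) ℝ := ∫ t in Set.Ioi (0 : ℝ), NormedSpace.exp (t • A)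
    with hI
  have hAI : A * I = -1 := by
    have := (ContinuousLinearMap.mul ℝ (Matrix (Fin m) (Fin m) ℝ) A).integral_comp_comm hint
    simp only [ContinuousLinearMap.mul_apply'] at this
    rw [← hL, ← this]
  have hIA : I * A = -1 := by
    have := ((ContinuousLinearMap.mul ℝ (Matrix (Fin m) (Fin m) ℝ)).flip A).integral_comp_comm
      hint
    simp only [ContinuousLinearMap.flip_apply, ContinuousLinearMap.mul_apply'] at this
    rw [← hR, ← this]
  have hneg : s • (1 : Matrix (Fin m) (Fin m) ℝ) - Q = -A := by rw [hA, neg_sub]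
  have h1 : (s • (1 : Matrix (Fin m) (Fin m) ℝ) - Q) * I = 1 := by
    rw [hneg, neg_mul, hAI, neg_neg]
  have h2 : I * (s • (1 : Matrix (Fin m) (Fin m) ℝ) - Q) = 1 := by
    rw [hneg, mul_neg, hIA, neg_neg]
  refine ⟨?_, ⟨⟨_, I, h1, h2⟩, rfl⟩⟩
  have hinv : (s • (1 : Matrix (Fin m) (Fin m) ℝ) - Q)⁻¹ = I := Matrix.inv_eq_right_inv h1
  rw [hinv, hI]
  congr 1
  exact integral_congr_ae (Eventually.of_forall fun t => key t)
end

section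
/- Let Q be the generator of an irreducible finite continuous-time Markov chain on Fin m with stationary distribution π (π Q = 0, π > 0, ∑π_k = 1). Then lim_{s→0⁺} s·(sI − Q)⁻¹ = P₀, where P₀ is the m×m matrix with (P₀)_{kr} = π_r for all k. -/
open Matrix MeasureTheory Filter

attribute [local instance] Matrix.linftyOpNormedAddCommGroup Matrix.linftyOpNormedRing
  Matrix.linftyOpNormedAlgebra Matrix.linftyOpNormedSpace

/-- If `Q *ᵥ v = 0` then the matrix exponential of `Q` fixes `v`. -/
lemma exp_mulVec_fix {m : ℕ} (Q : Matrix (Fin m) (Fin m) ℝ) (v : Fin m → ℝ)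
    (hv : Q.mulVec v = 0) : (NormedSpace.exp Q).mulVec v = v := by
  classical
  let L : Matrix (Fin m) (Fin m) ℝ →ₗ[ℝ] (Fin m → ℝ) :=
    { toFun := fun A => A.mulVec v
      map_add' := fun A B => Matrix.add_mulVec A B v
      map_smul' := fun c A => Matrix.smul_mulVec c A v }
  let L' : Matrix (Fin m) (Fin m) ℝ →L[ℝ] (Fin m → ℝ) :=
    { toLinearMap := L, cont := L.continuous_of_finiteDimensional }
  have hpow : ∀ n : ℕ, 1 ≤ n → (Q ^ n).mulVec v = 0 := by
    intro n hn
    induction n with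
    | zero => omega
    | succ k ih =>
      rcases Nat.eq_zero_or_pos k with hk | hk
      · subst hk; simpa [pow_succ] using hv
      · rw [pow_succ, ← Matrix.mulVec_mulVec, hv, Matrix.mulVec_zero]
  have hsum := NormedSpace.expSeries_summable' (𝕂 := ℝ) Q
  have hmap : L' (NormedSpace.exp Q) = ∑' n : ℕ, L' ((n.factorial : ℝ)⁻¹ • Q ^ n) := by
    rw [NormedSpace.exp_eq_tsum ℝ]
    exact L'.map_tsum hsum
  have : L' (NormedSpace.exp Q) = v := by
    rw [hmap]
    have h0 : ∀ n : ℕ, n ≠ 0 → L' ((n.factorial : ℝ)⁻¹ • Q ^ n) = 0 := by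
      intro n hn
      have : (Q ^ n).mulVec v = 0 := hpow n (Nat.one_le_iff_ne_zero.2 hn)
      simp [L', L, Matrix.smul_mulVec, this]
    rw [tsum_eq_single 0 h0]
    simp [L', L]
  simpa [L', L] using this

/-- If `Q` has zero row sums and positive exponential, then the kernel of `Q` consists of
constant vectors. -/
lemma ker_const {m : ℕ} (Q : Matrix (Fin m) (Fin m) ℝ)
    (hrow : ∀ k, ∑ r, Q k r = 0)
    (hpos : ∀ k r, 0 < NormedSpace.exp Q k r)
    (v : Fin m → ℝ) (hv : Q.mulVec v = 0) : ∀ k r, v k = v r := by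
  classical
  set P := NormedSpace.exp Q with hP
  have hone : Q.mulVec (fun _ => 1) = 0 := by
    ext k; simpa [Matrix.mulVec, dotProduct] using hrow k
  have hProw : ∀ k, ∑ r, P k r = 1 := by
    intro k
    have := congrFun (exp_mulVec_fix Q (fun _ => 1) hone) k
    simpa [Matrix.mulVec, dotProduct] using this
  have hPv : ∀ k, ∑ r, P k r * v r = v k := by
    intro k
    have := congrFun (exp_mulVec_fix Q v hv) k
    simpa [Matrix.mulVec, dotProduct] using this
  -- take the argmax
  rcases Nat.eq_zero_or_pos m with hm | hm
  · intro k; exact absurd k.2 (by omega)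
  haveI : Nonempty (Fin m) := ⟨⟨0, hm⟩⟩
  obtain ⟨k₀, -, hk₀⟩ := Finset.exists_max_image Finset.univ v ⟨Classical.arbitrary (Fin m),
    Finset.mem_univ _⟩
  have hconst : ∀ r, v r = v k₀ := by
    have hsum0 : ∑ r, P k₀ r * (v k₀ - v r) = 0 := by
      have : ∑ r, P k₀ r * (v k₀ - v r) = (∑ r, P k₀ r) * v k₀ - ∑ r, P k₀ r * v r := by
        rw [Finset.sum_mul]
        rw [← Finset.sum_sub_distrib]
        congr 1; ext r; ring
      rw [this, hProw, hPv, one_mul, sub_self]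
    have hnonneg : ∀ r ∈ Finset.univ, 0 ≤ P k₀ r * (v k₀ - v r) := by
      intro r _
      exact mul_nonneg (hpos k₀ r).le (sub_nonneg.2 (hk₀ r (Finset.mem_univ r)))
    have := (Finset.sum_eq_zero_iff_of_nonneg hnonneg).1 hsum0
    intro r
    have hr := this r (Finset.mem_univ r)
    have := mul_eq_zero.1 hr
    rcases this with h | h
    · exact absurd h (ne_of_gt (hpos k₀ r))
    · linarith [sub_eq_zero.1 h]
  intro k r; rw [hconst k, hconst r]

theorem stmt_13 {m : ℕ} (Q : Matrix (Fin m) (Fin m) ℝ)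
    (hoff : ∀ k r, k ≠ r → 0 ≤ Q k r) (hrow : ∀ k, ∑ r, Q k r = 0)
    (hirr : ∀ t > (0 : ℝ), ∀ k r, 0 < NormedSpace.exp (t • Q) k r)
    (π : Fin m → ℝ) (hπpos : ∀ k, 0 < π k) (hπsum : ∑ k, π k = 1)
    (hπQ : Matrix.vecMul π Q = 0) :
    Tendsto (fun s : ℝ => s • (s • (1 : Matrix (Fin m) (Fin m) ℝ) - Q)⁻¹)
      (nhdsWithin 0 (Set.Ioi 0))
      (nhds (Matrix.of fun _ r => π r)) := by
  classical
  set P₀ : Matrix (Fin m) (Fin m) ℝ := Matrix.of (fun _ r => π r) with hP₀def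
  -- algebraic facts about P₀
  have hQP : Q * P₀ = 0 := by
    ext k r
    simp only [Matrix.mul_apply, hP₀def, Matrix.of_apply, Matrix.zero_apply]
    rw [← Finset.sum_mul, hrow, zero_mul]
  have hPQ : P₀ * Q = 0 := by
    ext k r
    have := congrFun hπQ r
    simp only [Matrix.vecMul, dotProduct, Pi.zero_apply] at this
    simpa [Matrix.mul_apply, hP₀def] using this
  have hPP : P₀ * P₀ = P₀ := by
    ext k r
    simp only [Matrix.mul_apply, hP₀def, Matrix.of_apply]
    rw [← Finset.sum_mul, hπsum, one_mul]
  set A : Matrix (Fin m) (Fin m) ℝ := P₀ - Q with hAdef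
  -- kernel of Q is constants
  have hker : ∀ v : Fin m → ℝ, Q.mulVec v = 0 → ∀ k r, v k = v r := by
    intro v hv
    have hpos : ∀ k r, 0 < NormedSpace.exp Q k r := by
      have := hirr 1 one_pos
      simpa using this
    exact ker_const Q hrow hpos v hv
  -- A is injective as mulVec
  have hAinj : ∀ v : Fin m → ℝ, A.mulVec v = 0 → v = 0 := by
    intro v hv
    set c : ℝ := ∑ r, π r * v r with hc
    have hP₀v : P₀.mulVec v = fun _ => c := by
      ext k; simp [hP₀def, Matrix.mulVec, dotProduct, hc]
    have hQv : Q.mulVec v = fun _ => c := by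
      have : P₀.mulVec v - Q.mulVec v = 0 := by
        rw [← Matrix.sub_mulVec]; exact hv
      have h2 : Q.mulVec v = P₀.mulVec v := by
        have := sub_eq_zero.1 this; exact this.symm
      rw [h2, hP₀v]
    have hc0 : c = 0 := by
      have h1 : π ⬝ᵥ Q.mulVec v = 0 := by
        rw [dotProduct_mulVec, hπQ]; simp
      rw [hQv] at h1
      simp only [dotProduct] at h1
      rw [← Finset.sum_mul, hπsum, one_mul] at h1
      exact h1
    have hQv0 : Q.mulVec v = 0 := by
      rw [hQv, hc0]; ext k; simp
    rcases Nat.eq_zero_or_pos m with hm | hm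
    · ext k; exact absurd k.2 (by omega)
    have hconst := hker v hQv0
    ext k
    have : c = v k := by
      rw [hc]
      have : ∀ r, v r = v k := fun r => hconst r k
      calc ∑ r, π r * v r = ∑ r, π r * v k := by
            congr 1; ext r; rw [this r]
        _ = (∑ r, π r) * v k := by rw [Finset.sum_mul]
        _ = v k := by rw [hπsum, one_mul]
    rw [Pi.zero_apply, ← this, hc0]
  have hdetA : A.det ≠ 0 := by
    intro h
    obtain ⟨v, hv, hv0⟩ := Matrix.exists_mulVec_eq_zero_iff.2 h
    exact hv (hAinj v hv0)
  -- commutation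
  have hAP : A * P₀ = P₀ := by rw [hAdef, Matrix.sub_mul, hPP, hQP, sub_zero]
  have hPA : P₀ * A = P₀ := by rw [hAdef, Matrix.mul_sub, hPP, hPQ, sub_zero]
  -- the limit function rewritten
  set G : ℝ → Matrix (Fin m) (Fin m) ℝ :=
    fun s => P₀ + (s * ((s • (1 : Matrix (Fin m) (Fin m) ℝ) + A).det)⁻¹) •
      ((s • (1 : Matrix (Fin m) (Fin m) ℝ) + A).adjugate * (1 - P₀)) with hGdef
  have hBcont : Continuous fun s : ℝ => s • (1 : Matrix (Fin m) (Fin m) ℝ) + A :=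
    (continuous_id.smul continuous_const).add continuous_const
  have hdetcont : Continuous fun s : ℝ => (s • (1 : Matrix (Fin m) (Fin m) ℝ) + A).det :=
    hBcont.matrix_det
  have hdet0 : (((0 : ℝ) • (1 : Matrix (Fin m) (Fin m) ℝ) + A).det) = A.det := by
    rw [zero_smul, zero_add]
  -- eventually the det is nonzero
  have hev : ∀ᶠ s in nhdsWithin (0 : ℝ) (Set.Ioi 0),
      ((s • (1 : Matrix (Fin m) (Fin m) ℝ) + A).det) ≠ 0 := by
    have : ∀ᶠ s in nhds (0 : ℝ), ((s • (1 : Matrix (Fin m) (Fin m) ℝ) + A).det) ≠ 0 := by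
      apply hdetcont.continuousAt.eventually_ne
      rw [hdet0]; exact hdetA
    exact nhdsWithin_le_nhds this
  have hevpos : ∀ᶠ s in nhdsWithin (0 : ℝ) (Set.Ioi 0), (0 : ℝ) < s :=
    eventually_nhdsWithin_of_forall (fun s hs => hs)
  -- key identity
  have hEq : ∀ᶠ s in nhdsWithin (0 : ℝ) (Set.Ioi 0),
      s • (s • (1 : Matrix (Fin m) (Fin m) ℝ) - Q)⁻¹ = G s := by
    filter_upwards [hev, hevpos] with s hdet hs
    set B : Matrix (Fin m) (Fin m) ℝ := s • (1 : Matrix (Fin m) (Fin m) ℝ) + A with hBdef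
    have hBunit : IsUnit B.det := isUnit_iff_ne_zero.2 hdet
    have hBinv : B * B⁻¹ = 1 := Matrix.mul_nonsing_inv B hBunit
    have hinvB : B⁻¹ * B = 1 := Matrix.nonsing_inv_mul B hBunit
    have hPB : P₀ * B = B * P₀ := by
      rw [hBdef, Matrix.mul_add, Matrix.add_mul, hPA, hAP]
      congr 1
      rw [Matrix.mul_smul, Matrix.smul_mul, Matrix.mul_one, Matrix.one_mul]
    have hPBinv : P₀ * B⁻¹ = B⁻¹ * P₀ := by
      calc P₀ * B⁻¹ = B⁻¹ * B * P₀ * B⁻¹ := by rw [hinvB, Matrix.one_mul]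
        _ = B⁻¹ * (B * P₀) * B⁻¹ := by rw [Matrix.mul_assoc B⁻¹ B P₀]
        _ = B⁻¹ * (P₀ * B) * B⁻¹ := by rw [hPB]
        _ = B⁻¹ * P₀ * (B * B⁻¹) := by rw [Matrix.mul_assoc, Matrix.mul_assoc, Matrix.mul_assoc]
        _ = B⁻¹ * P₀ := by rw [hBinv, Matrix.mul_one]
    have hsQ : s • (1 : Matrix (Fin m) (Fin m) ℝ) - Q = B - P₀ := by
      rw [hBdef, hAdef]; abel
    set W : Matrix (Fin m) (Fin m) ℝ := s⁻¹ • P₀ + B⁻¹ * (1 - P₀) with hWdef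
    have hright : (s • (1 : Matrix (Fin m) (Fin m) ℝ) - Q) * W = 1 := by
      rw [hsQ, hWdef, Matrix.mul_add]
      have hBP₀ : B * P₀ = s • P₀ + P₀ := by
        rw [hBdef, Matrix.add_mul, hAP, Matrix.smul_mul, Matrix.one_mul]
      have h1 : (B - P₀) * (s⁻¹ • P₀) = P₀ := by
        rw [Matrix.mul_smul, Matrix.sub_mul, hBP₀, hPP]
        rw [add_sub_cancel_right, smul_smul, inv_mul_cancel₀ (ne_of_gt hs), one_smul]
      have h2 : (B - P₀) * (B⁻¹ * (1 - P₀)) = 1 - P₀ := by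
        rw [Matrix.sub_mul, ← Matrix.mul_assoc, hBinv, Matrix.one_mul, ← Matrix.mul_assoc,
          hPBinv, Matrix.mul_assoc, Matrix.mul_sub, Matrix.mul_one, hPP, sub_self,
          Matrix.mul_zero, sub_zero]
      rw [h1, h2, add_sub_cancel]
    have hinv : (s • (1 : Matrix (Fin m) (Fin m) ℝ) - Q)⁻¹ = W :=
      Matrix.inv_eq_right_inv hright
    rw [hinv, hWdef, smul_add, smul_smul, mul_inv_cancel₀ (ne_of_gt hs), one_smul]
    rw [hGdef]
    congr 1
    rw [Matrix.inv_def, Ring.inverse_eq_inv']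
    rw [Matrix.smul_mul, smul_smul, ← hBdef]
  -- limit of G
  have hlim : Tendsto G (nhdsWithin (0 : ℝ) (Set.Ioi 0)) (nhds P₀) := by
    have hdettend : Tendsto (fun s : ℝ => ((s • (1 : Matrix (Fin m) (Fin m) ℝ) + A).det)⁻¹)
        (nhds 0) (nhds (A.det)⁻¹) := by
      have := (hdetcont.tendsto (0 : ℝ)).inv₀ (by rw [hdet0]; exact hdetA)
      rwa [hdet0] at this
    have h1 : Tendsto (fun s : ℝ => s * ((s • (1 : Matrix (Fin m) (Fin m) ℝ) + A).det)⁻¹)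
        (nhds 0) (nhds 0) := by
      have := tendsto_id.mul hdettend
      simpa using this
    have h2 : Tendsto (fun s : ℝ => (s • (1 : Matrix (Fin m) (Fin m) ℝ) + A).adjugate * (1 - P₀))
        (nhds 0) (nhds (((0:ℝ) • (1 : Matrix (Fin m) (Fin m) ℝ) + A).adjugate * (1 - P₀))) :=
      ((hBcont.matrix_adjugate).mul continuous_const).tendsto 0
    have h3 : Tendsto G (nhds (0 : ℝ)) (nhds P₀) := by
      have := (tendsto_const_nhds (x := P₀)).add (h1.smul h2)
      simpa [hGdef] using this
    exact h3.mono_left nhdsWithin_le_nhds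
  exact Tendsto.congr' (by filter_upwards [hEq] with s h using h.symm) hlim
end
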